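/- Let n be a natural number, t, θ₀, θ₁, g ∈ ℂ, and for x, y : Fin n → ℂ define D(x,y) = Σ_i [x_i y_i² − y_i x_i² − t x_i y_i + θ₀ y_i − (θ₀+θ₁) x_i]. Define H_red(x, y; θ₀, θ₁) = D(x,y) + g² Σ_{i<j} (x_i + x_j)/(x_i − x_j)² (for x injective) and H_dual(x, y; θ₀, θ₁) = D(x,y) − g² Σ_{i<j} (y_i + y_j)/(y_i − y_j)² (for y injective). Then for any q, p : Fin n → ℂ with q injective, H_dual(−p, −q; θ₀+θ₁, −θ₁) = H_red(q, p; θ₀, θ₁). -/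
import Mathlib


/-- The common uncoupled part of the Calogero–Painlevé IV Hamiltonians:
`D(x,y) = Σᵢ [xᵢyᵢ² − yᵢxᵢ² − t xᵢ yᵢ + θ₀ yᵢ − (θ₀+θ₁) xᵢ]`. -/
noncomputable def DpartIV (n : ℕ) (t θ₀ θ₁ : ℂ) (x y : Fin n → ℂ) : ℂ :=
  ∑ i, (x i * (y i) ^ 2 - y i * (x i) ^ 2 - t * x i * y i + θ₀ * y i - (θ₀ + θ₁) * x i)

/-- The reduced Calogero–Painlevé IV Hamiltonian (interaction in the coordinates). -/
noncomputable def HredIV (n : ℕ) (t θ₀ θ₁ g : ℂ) (x y : Fin n → ℂ) : ℂ :=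
  DpartIV n t θ₀ θ₁ x y
    + g ^ 2 * ∑ i, ∑ j, if i < j then (x i + x j) / (x i - x j) ^ 2 else 0

/-- The dual Calogero–Painlevé IV Hamiltonian (interaction in the momenta). -/
noncomputable def HdualIV (n : ℕ) (t θ₀ θ₁ g : ℂ) (x y : Fin n → ℂ) : ℂ :=
  DpartIV n t θ₀ θ₁ x y
    - g ^ 2 * ∑ i, ∑ j, if i < j then (y i + y j) / (y i - y j) ^ 2 else 0

/-- Self-duality of Calogero–Painlevé IV (Proposition 3.1): the anti-symplectic involution
`qᵢ ↦ −pᵢ, pᵢ ↦ −qᵢ` with parameter change `θ₀ ↦ θ₀+θ₁, θ₁ ↦ −θ₁` maps the dual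
Hamiltonian to the reduced one. -/
theorem calogero_painleveIV_self_dual (n : ℕ) (t θ₀ θ₁ g : ℂ)
    (q p : Fin n → ℂ) (hq : Function.Injective q) :
    HdualIV n t (θ₀ + θ₁) (-θ₁) g (fun i => -p i) (fun i => -q i)
      = HredIV n t θ₀ θ₁ g q p := by
  simp only [HdualIV, HredIV, DpartIV, sub_eq_add_neg, neg_mul_eq_mul_neg,
    ← Finset.sum_neg_distrib]
  congr 1
  · exact Finset.sum_congr rfl fun i _ => by ring
  · congr 1
    refine Finset.sum_congr rfl fun i _ => ?_
    refine Finset.sum_congr rfl fun j _ => ?_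
    split <;> simp <;> ring
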